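/- Volume-ratio bound: for integers 8 ≤ N ≤ d/2 with d large enough that d((N−1)/N)^{d−1} ≤ 1, and for any integer 1 ≤ m ≤ N−7 with t = (N−m+1)/(N−m+9), the following inequality of volumes holds: Vol^{d−1}({λ ∈ [0,1]^d : λ_{[m]} ≤ t, ∑λᵢ = N}) / Vol^{d−1}({λ ∈ [0,1]^d : ∑λᵢ = N}) ≥ 1 − C(d,m)·(N − mt)^{d−1} / ((1 − d((N−1)/N)^{d−1}) N^{d−1}), where λ_{[m]} denotes the m-th largest entry. -/

import Mathlib

open Finset MeasureTheory
open scoped Pointwise ENNReal NNReal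

noncomputable section

def stdSpx (n : ℕ) : Set (EuclideanSpace ℝ (Fin n)) :=
  {x | (∀ i, 0 ≤ x i) ∧ ∑ i, x i = 1}

def liftMap (k : ℕ) : (Fin k → ℝ) →ₗ[ℝ] EuclideanSpace ℝ (Fin (k+1)) where
  toFun y := WithLp.toLp 2 (Fin.snoc y (-∑ j, y j))
  map_add' y z := by
    ext i
    induction i using Fin.lastCases with
    | last =>
      simp [Fin.snoc_last, Finset.sum_add_distrib]
      ring
    | cast j => simp [Fin.snoc_castSucc]
  map_smul' c y := by
    ext i
    induction i using Fin.lastCases with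
    | last => simp [Fin.snoc_last, Finset.mul_sum]
    | cast j => simp [Fin.snoc_castSucc]

def projMap (k : ℕ) : EuclideanSpace ℝ (Fin (k+1)) →ₗ[ℝ] (Fin k → ℝ) where
  toFun x := fun j => x j.castSucc
  map_add' _ _ := rfl
  map_smul' _ _ := rfl

lemma liftMap_castSucc (k : ℕ) (y : Fin k → ℝ) (j : Fin k) :
    liftMap k y j.castSucc = y j := by simp [liftMap, Fin.snoc_castSucc]

lemma liftMap_last (k : ℕ) (y : Fin k → ℝ) :
    liftMap k y (Fin.last k) = -∑ j, y j := by simp [liftMap]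

lemma hmeas_pi (k : ℕ) : (μH[(k:ℝ)] : Measure (Fin k → ℝ)) = volume := by
  have := MeasureTheory.hausdorffMeasure_pi_real (ι := Fin k)
  rwa [Fintype.card_fin] at this

lemma spx_fin (k : ℕ) : μH[(k:ℝ)] (stdSpx (k+1)) ≠ ⊤ := by
  classical
  set L := LinearMap.toContinuousLinearMap (liftMap k) with hL
  set cst : EuclideanSpace ℝ (Fin (k+1)) := WithLp.toLp 2 (Fin.snoc (fun _ => (0:ℝ)) 1) with hcst
  set K : Set (Fin k → ℝ) := Set.univ.pi fun _ => Set.Icc (0:ℝ) 1 with hK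
  have hsub : stdSpx (k+1) ⊆ cst +ᵥ (L '' K) := by
    rintro x ⟨h0, h1⟩
    refine ⟨L (fun j => x j.castSucc), ⟨fun j => x j.castSucc, ?_, rfl⟩, ?_⟩
    · intro j _
      refine ⟨h0 _, ?_⟩
      calc x j.castSucc ≤ ∑ i, x i :=
            Finset.single_le_sum (fun i _ => h0 i) (Finset.mem_univ _)
        _ = 1 := h1
    · have hLc : ∀ i, (L (fun j => x j.castSucc)) i = (liftMap k (fun j => x j.castSucc)) i := by
        intro i; rfl
      ext i
      simp only [vadd_eq_add, PiLp.add_apply]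
      rw [hLc]
      induction i using Fin.lastCases with
      | last =>
        have hsum := Fin.sum_univ_castSucc (f := fun i => x i)
        rw [h1] at hsum
        rw [liftMap_last, hcst]
        simp only [PiLp.toLp_apply, Fin.snoc_last]
        linarith
      | cast j =>
        rw [liftMap_castSucc, hcst]
        simp [Fin.snoc_castSucc]
  have hb : μH[(k:ℝ)] (stdSpx (k+1)) ≤ (‖L‖₊ : ℝ≥0∞) ^ (k:ℝ) * μH[(k:ℝ)] K := by
    calc μH[(k:ℝ)] (stdSpx (k+1)) ≤ μH[(k:ℝ)] (cst +ᵥ (L '' K)) := measure_mono hsub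
      _ = μH[(k:ℝ)] (L '' K) :=
          MeasureTheory.hausdorffMeasure_vadd _ (Or.inl (by positivity)) _
      _ ≤ (‖L‖₊ : ℝ≥0∞) ^ (k:ℝ) * μH[(k:ℝ)] K :=
          L.lipschitz.hausdorffMeasure_image_le (by positivity) _
  have hKvol : μH[(k:ℝ)] K = 1 := by
    rw [hmeas_pi k, hK, volume_pi_pi]
    simp [Real.volume_Icc]
  rw [hKvol, mul_one] at hb
  exact ne_top_of_le_ne_top (ENNReal.rpow_lt_top_of_nonneg (by positivity) ENNReal.coe_ne_top).ne hb

lemma spx_pos (k : ℕ) : μH[(k:ℝ)] (stdSpx (k+1)) ≠ 0 := by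
  classical
  set P := LinearMap.toContinuousLinearMap (projMap k) with hP
  set box : Set (Fin k → ℝ) := Set.univ.pi fun _ => Set.Ioo (0:ℝ) (1/(k+1)) with hbox
  have hsub : box ⊆ P '' stdSpx (k+1) := by
    intro y hy
    have hy' : ∀ j, 0 < y j ∧ y j < 1/(k+1) := fun j => hy j (Set.mem_univ j)
    have hsumle : ∑ j, y j ≤ 1 := by
      calc ∑ j, y j ≤ ∑ _j : Fin k, (1/(k+1) : ℝ) :=
            Finset.sum_le_sum (fun j _ => (hy' j).2.le)
        _ = k * (1/(k+1)) := by simp [mul_comm]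
        _ ≤ 1 := by
            rw [mul_one_div, div_le_one (by positivity)]
            push_cast; linarith
    set x : EuclideanSpace ℝ (Fin (k+1)) := WithLp.toLp 2 (Fin.snoc y (1 - ∑ j, y j)) with hx
    have hxc : ∀ j : Fin k, x j.castSucc = y j := by
      intro j; rw [hx, PiLp.toLp_apply]; exact Fin.snoc_castSucc _ _ _
    have hxl : x (Fin.last k) = 1 - ∑ j, y j := by
      rw [hx, PiLp.toLp_apply]; exact Fin.snoc_last _ _
    refine ⟨x, ⟨?_, ?_⟩, ?_⟩
    · intro i
      induction i using Fin.lastCases with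
      | last => rw [hxl]; linarith
      | cast j => rw [hxc]; exact (hy' j).1.le
    · rw [Fin.sum_univ_castSucc (f := fun i => x i)]
      simp only [hxc, hxl]
      ring
    · funext j
      have : P x j = x j.castSucc := rfl
      rw [this, hxc]
  have hb : μH[(k:ℝ)] box ≤ (‖P‖₊ : ℝ≥0∞) ^ (k:ℝ) * μH[(k:ℝ)] (stdSpx (k+1)) := by
    calc μH[(k:ℝ)] box ≤ μH[(k:ℝ)] (P '' stdSpx (k+1)) := measure_mono hsub
      _ ≤ _ := P.lipschitz.hausdorffMeasure_image_le (by positivity) _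
  have hboxpos : 0 < μH[(k:ℝ)] box := by
    rw [hmeas_pi k, hbox, volume_pi_pi]
    simp only [Real.volume_Ioo, sub_zero, Finset.prod_const, Finset.card_univ, Fintype.card_fin]
    exact ENNReal.pow_pos (ENNReal.ofReal_pos.2 (by positivity)) k
  intro h0
  rw [h0, mul_zero] at hb
  exact lt_irrefl 0 (hboxpos.trans_le hb)

lemma meas_shift (k : ℕ) (v : EuclideanSpace ℝ (Fin (k+1))) (r c : ℝ) (hr : 0 < r)
    (hc : ∑ i, v i + r = c) :
    μH[(k:ℝ)] {x : EuclideanSpace ℝ (Fin (k+1)) | (∀ i, v i ≤ x i) ∧ ∑ i, x i = c}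
      = ENNReal.ofReal (r ^ k) * μH[(k:ℝ)] (stdSpx (k+1)) := by
  have hset : {x : EuclideanSpace ℝ (Fin (k+1)) | (∀ i, v i ≤ x i) ∧ ∑ i, x i = c}
      = v +ᵥ (r • stdSpx (k+1)) := by
    ext x
    simp only [Set.mem_setOf_eq, Set.mem_vadd_set, Set.mem_smul_set, stdSpx]
    constructor
    · rintro ⟨hle, hsum⟩
      refine ⟨r • (r⁻¹ • (x - v)), ⟨r⁻¹ • (x - v), ⟨?_, ?_⟩, rfl⟩, ?_⟩
      · intro i
        have : (0:ℝ) ≤ x i - v i := sub_nonneg.2 (hle i)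
        simpa [PiLp.smul_apply, PiLp.sub_apply, smul_eq_mul] using
          mul_nonneg (inv_nonneg.2 hr.le) this
      · simp only [PiLp.smul_apply, PiLp.sub_apply, smul_eq_mul]
        rw [← Finset.mul_sum, Finset.sum_sub_distrib]
        field_simp
        linarith [hc, hsum]
      · ext i
        simp only [vadd_eq_add, PiLp.add_apply, PiLp.smul_apply, PiLp.sub_apply, smul_eq_mul]
        field_simp
        ring
    · rintro ⟨y, ⟨z, ⟨hz0, hz1⟩, rfl⟩, rfl⟩
      constructor
      · intro i
        simp only [vadd_eq_add, PiLp.add_apply, PiLp.smul_apply, smul_eq_mul]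
        nlinarith [hz0 i]
      · simp only [vadd_eq_add, PiLp.add_apply, PiLp.smul_apply, smul_eq_mul]
        rw [Finset.sum_add_distrib, ← Finset.mul_sum, hz1]
        linarith
  rw [hset, MeasureTheory.hausdorffMeasure_vadd _ (Or.inl (by positivity)),
    Measure.hausdorffMeasure_smul₀ (by positivity) (ne_of_gt hr),
    ENNReal.smul_def, smul_eq_mul]
  congr 1
  rw [ENNReal.coe_rpow_of_nonneg _ (by positivity), ENNReal.rpow_natCast, ← ENNReal.coe_pow,
    ← nnnorm_pow]
  exact Real.enorm_eq_ofReal (by positivity)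

/-- **Volume-ratio bound.** For integers `8 ≤ N ≤ d/2` with
`d((N−1)/N)^{d−1} ≤ 1`, any integer `1 ≤ m ≤ N−7` and `t = (N−m+1)/(N−m+9)`:
the `(d−1)`-volume fraction of the slice `{λ ∈ [0,1]^d : λ_{[m]} ≤ t, ∑λ = N}` inside
`{λ ∈ [0,1]^d : ∑λ = N}` is at least
`1 − C(d,m)(N−mt)^{d−1} / ((1 − d((N−1)/N)^{d−1}) N^{d−1})`. The condition `λ_{[m]} ≤ t`
(the `m`-th largest entry is `≤ t`) says that fewer than `m` entries exceed `t`. -/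
theorem volume_ratio_lower_bound (d N m : ℕ) (t : ℝ)
    (h8 : 8 ≤ N) (hNd : 2 * N ≤ d)
    (hlarge : (d : ℝ) * (((N : ℝ) - 1) / N) ^ (d - 1) ≤ 1)
    (hm1 : 1 ≤ m) (hm2 : m ≤ N - 7)
    (ht : t = ((N : ℝ) - m + 1) / ((N : ℝ) - m + 9)) :
    1 - (d.choose m : ℝ) * ((N : ℝ) - m * t) ^ (d - 1) /
        ((1 - (d : ℝ) * (((N : ℝ) - 1) / N) ^ (d - 1)) * (N : ℝ) ^ (d - 1)) ≤
      (μH[(d : ℝ) - 1]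
          {x : EuclideanSpace ℝ (Fin d) |
            (∀ i, x i ∈ Set.Icc (0 : ℝ) 1) ∧
              ((Finset.univ.filter fun i : Fin d => t < x i).card < m) ∧
              ∑ i, x i = (N : ℝ)}).toReal /
      (μH[(d : ℝ) - 1]
          {x : EuclideanSpace ℝ (Fin d) |
            (∀ i, x i ∈ Set.Icc (0 : ℝ) 1) ∧ ∑ i, x i = (N : ℝ)}).toReal := by
  classical
  obtain ⟨k, rfl⟩ : ∃ k, d = k + 1 := ⟨d - 1, by omega⟩
  have hm2' : m + 7 ≤ N := by omega
  have hk : 15 ≤ k := by omega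
  have hexp : ((k+1:ℕ):ℝ) - 1 = (k:ℝ) := by push_cast; ring
  rw [hexp]
  simp only [Nat.add_sub_cancel] at hlarge ⊢
  -- basic real facts
  have hN0 : (0:ℝ) < N := by positivity
  have hN1 : (1:ℝ) ≤ (N:ℝ) := by exact_mod_cast Nat.one_le_iff_ne_zero.2 (by omega)
  have hmR : (m:ℝ) + 7 ≤ (N:ℝ) := by exact_mod_cast hm2'
  have hdenpos : (0:ℝ) < (N:ℝ) - m + 9 := by linarith
  have ht0 : 0 < t := by
    rw [ht]; apply div_pos <;> linarith
  have ht1 : t ≤ 1 := by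
    rw [ht, div_le_one hdenpos]; linarith
  have hr : 0 < (N:ℝ) - m * t := by
    have h1 : (m:ℝ) * t ≤ (m:ℝ) * 1 := by
      apply mul_le_mul_of_nonneg_left ht1 (by positivity)
    have : (1:ℝ) ≤ m := by exact_mod_cast hm1
    nlinarith
  -- strictness of the denominator
  have hstrictN : (k+1) * (N-1)^k < N^k := by
    have hle : ((k+1:ℕ):ℝ) * ((N-1:ℕ):ℝ)^k ≤ ((N:ℕ):ℝ)^k := by
      have hc1 : ((N-1:ℕ):ℝ) = (N:ℝ) - 1 := by
        have : (1:ℕ) ≤ N := by omega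
        push_cast [this]; ring
      rw [hc1]
      have := mul_le_mul_of_nonneg_right hlarge (le_of_lt (pow_pos hN0 k))
      rw [one_mul] at this
      calc ((k+1:ℕ):ℝ) * ((N:ℝ)-1)^k
          = ((k+1:ℕ):ℝ) * (((N:ℝ)-1)/N)^k * (N:ℝ)^k := by
            rw [div_pow]; field_simp
        _ ≤ (N:ℝ)^k := this
    have hleN : (k+1) * (N-1)^k ≤ N^k := by exact_mod_cast (by push_cast at hle ⊢; exact hle : (((k+1) * (N-1)^k : ℕ) : ℝ) ≤ ((N^k : ℕ) : ℝ))
    rcases lt_or_eq_of_le hleN with h | h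
    · exact h
    · exfalso
      have hdvd : (N-1)^k ∣ N^k := ⟨k+1, by rw [← h]; ring⟩
      have hco : Nat.Coprime ((N-1)^k) (N^k) := by
        apply Nat.Coprime.pow
        have hN' : N - 1 + 1 = N := by omega
        rw [← hN']
        simp [Nat.Coprime, Nat.gcd_comm, Nat.succ_sub_one]
      have hone : (N-1)^k = 1 := by
        have hg := Nat.gcd_eq_left hdvd
        rw [hco] at hg; omega
      have : 1 < (N-1)^k := Nat.one_lt_pow (by omega) (by omega)
      omega
  have hc1 : ((N-1:ℕ):ℝ) = (N:ℝ) - 1 := by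
    have : (1:ℕ) ≤ N := by omega
    push_cast [this]; ring
  have hP : (0:ℝ) < (N:ℝ)^k - ((k+1:ℕ):ℝ) * ((N:ℝ)-1)^k := by
    have := hstrictN
    have hcast : (((k+1) * (N-1)^k : ℕ):ℝ) < ((N^k : ℕ):ℝ) := by exact_mod_cast this
    push_cast [hc1] at hcast
    push_cast
    linarith
  have hden : (1 - ((k+1:ℕ):ℝ) * (((N:ℝ) - 1) / N) ^ k) * (N:ℝ) ^ k
      = (N:ℝ)^k - ((k+1:ℕ):ℝ) * ((N:ℝ)-1)^k := by
    rw [div_pow]; field_simp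
  -- sets
  set E := EuclideanSpace ℝ (Fin (k+1))
  set μ : Measure E := μH[(k:ℝ)] with hμ
  set Δm : ℝ≥0∞ := μ (stdSpx (k+1)) with hΔm
  set S : Set E := {x | (∀ i, x i ∈ Set.Icc (0:ℝ) 1) ∧ ∑ i, x i = (N:ℝ)} with hS
  set A : Set E := {x | (∀ i, x i ∈ Set.Icc (0:ℝ) 1) ∧
      ((Finset.univ.filter fun i : Fin (k+1) => t < x i).card < m) ∧ ∑ i, x i = (N:ℝ)} with hA
  set B : Set E := {x | (∀ i, x i ∈ Set.Icc (0:ℝ) 1) ∧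
      (m ≤ (Finset.univ.filter fun i : Fin (k+1) => t < x i).card) ∧ ∑ i, x i = (N:ℝ)} with hB
  set ND : Set E := {x | (∀ i, (0:ℝ) ≤ x i) ∧ ∑ i, x i = (N:ℝ)} with hND
  -- measure of ND
  have hNDmeas : μ ND = ENNReal.ofReal ((N:ℝ)^k) * Δm := by
    have h0 : ND = {x : E | (∀ i, (0:E) i ≤ x i) ∧ ∑ i, x i = (N:ℝ)} := by
      ext x
      constructor
      · rintro ⟨h1, h2⟩; exact ⟨fun i => h1 i, h2⟩
      · rintro ⟨h1, h2⟩; exact ⟨fun i => h1 i, h2⟩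
    rw [h0, hμ, hΔm]
    exact meas_shift k 0 ((N:ℝ)) ((N:ℝ)) hN0 (by simp)
  -- B bound
  have hBmeas : μ B ≤ ((k+1).choose m : ℝ≥0∞) * (ENNReal.ofReal (((N:ℝ) - m*t)^k) * Δm) := by
    set vT : Finset (Fin (k+1)) → E := fun T => WithLp.toLp 2 (fun i => if i ∈ T then t else 0) with hvT
    have hcover : B ⊆ ⋃ T ∈ Finset.powersetCard m (Finset.univ : Finset (Fin (k+1))),
        {x : E | (∀ i, vT T i ≤ x i) ∧ ∑ i, x i = (N:ℝ)} := by
      rintro x ⟨hx1, hx2, hx3⟩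
      obtain ⟨T, hTsub, hTcard⟩ := Finset.exists_subset_card_eq hx2
      have hTmem : T ∈ Finset.powersetCard m (Finset.univ : Finset (Fin (k+1))) :=
        Finset.mem_powersetCard.2 ⟨Finset.subset_univ T, hTcard⟩
      have hxmem : x ∈ {x : E | (∀ i, vT T i ≤ x i) ∧ ∑ i, x i = (N:ℝ)} := by
        refine ⟨fun i => ?_, hx3⟩
        by_cases hiT : i ∈ T
        · have hlt : t < x i := (Finset.mem_filter.1 (hTsub hiT)).2
          simp only [hvT, PiLp.toLp_apply, hiT, if_pos]
          exact hlt.le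
        · simp only [hvT, PiLp.toLp_apply, hiT, if_neg, not_false_iff]
          exact (hx1 i).1
      exact Set.mem_biUnion hTmem hxmem
    calc μ B ≤ ∑ T ∈ Finset.powersetCard m (Finset.univ : Finset (Fin (k+1))),
          μ {x : E | (∀ i, vT T i ≤ x i) ∧ ∑ i, x i = (N:ℝ)} :=
        le_trans (measure_mono hcover) (measure_biUnion_finset_le _ _)
      _ = ∑ T ∈ Finset.powersetCard m (Finset.univ : Finset (Fin (k+1))),
          ENNReal.ofReal (((N:ℝ) - m*t)^k) * Δm := by
          apply Finset.sum_congr rfl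
          intro T hT
          have hTcard : T.card = m := (Finset.mem_powersetCard.1 hT).2
          have hsum : ∑ i, vT T i = m * t := by
            rw [hvT]
            simp only [PiLp.toLp_apply]
            rw [Finset.sum_ite_mem, Finset.univ_inter, Finset.sum_const, hTcard, nsmul_eq_mul]
          rw [hμ, hΔm]
          exact meas_shift k (vT T) ((N:ℝ) - m*t) ((N:ℝ)) hr (by rw [hsum]; ring)
      _ = ((k+1).choose m : ℝ≥0∞) * (ENNReal.ofReal (((N:ℝ) - m*t)^k) * Δm) := by
          rw [Finset.sum_const, Finset.card_powersetCard, Finset.card_univ, Fintype.card_fin,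
            nsmul_eq_mul]
  -- ND \ S bound
  have hDiff : μ (ND \ S) ≤ ((k+1:ℕ) : ℝ≥0∞) * (ENNReal.ofReal (((N:ℝ)-1)^k) * Δm) := by
    set sv : Fin (k+1) → E := fun i => WithLp.toLp 2 (fun j => if j = i then (1:ℝ) else 0) with hsv
    have hcover : ND \ S ⊆ ⋃ i : Fin (k+1),
        {x : E | (∀ j, sv i j ≤ x j) ∧ ∑ j, x j = (N:ℝ)} := by
      rintro x ⟨⟨hx0, hxs⟩, hxS⟩
      have : ∃ i, 1 < x i := by
        by_contra hcon
        push_neg at hcon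
        exact hxS ⟨fun i => ⟨hx0 i, hcon i⟩, hxs⟩
      obtain ⟨i, hi⟩ := this
      refine Set.mem_iUnion.2 ⟨i, fun j => ?_, hxs⟩
      by_cases hji : j = i
      · subst hji; simp only [hsv, PiLp.toLp_apply, if_pos rfl]; exact hi.le
      · simp only [hsv, PiLp.toLp_apply, if_neg hji]; exact hx0 j
    calc μ (ND \ S) ≤ ∑ i : Fin (k+1), μ {x : E | (∀ j, sv i j ≤ x j) ∧ ∑ j, x j = (N:ℝ)} :=
        le_trans (measure_mono hcover) (measure_iUnion_fintype_le _ _)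
      _ = ∑ _i : Fin (k+1), ENNReal.ofReal (((N:ℝ)-1)^k) * Δm := by
          apply Finset.sum_congr rfl
          intro i _
          have hsum : ∑ j, sv i j = 1 := by
            rw [hsv]; simp
          rw [hμ, hΔm]
          exact meas_shift k (sv i) ((N:ℝ)-1) ((N:ℝ)) (by linarith) (by rw [hsum]; ring)
      _ = ((k+1:ℕ) : ℝ≥0∞) * (ENNReal.ofReal (((N:ℝ)-1)^k) * Δm) := by
          rw [Finset.sum_const, Finset.card_univ, Fintype.card_fin, nsmul_eq_mul]
  -- subadditivity facts
  have hsubND : μ ND ≤ μ S + μ (ND \ S) :=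
    le_trans (measure_mono (fun x hx => by
      by_cases hxS : x ∈ S
      · exact Set.mem_union_left _ hxS
      · exact Set.mem_union_right _ ⟨hx, hxS⟩)) (measure_union_le _ _)
  have hsubS : μ S ≤ μ A + μ B :=
    le_trans (measure_mono (fun x hx => by
      rcases lt_or_ge ((Finset.univ.filter fun i : Fin (k+1) => t < x i).card) m with hlt | hge
      · exact Set.mem_union_left _ ⟨hx.1, hlt, hx.2⟩
      · exact Set.mem_union_right _ ⟨hx.1, hge, hx.2⟩)) (measure_union_le _ _)
  -- finiteness
  have hΔfin : Δm ≠ ⊤ := spx_fin k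
  have hΔpos : Δm ≠ 0 := spx_pos k
  have hNDfin : μ ND ≠ ⊤ := by
    rw [hNDmeas]; exact ENNReal.mul_ne_top ENNReal.ofReal_ne_top hΔfin
  have hS_ND : S ⊆ ND := fun x hx => ⟨fun i => (hx.1 i).1, hx.2⟩
  have hSfin : μ S ≠ ⊤ := ne_top_of_le_ne_top hNDfin (measure_mono hS_ND)
  have hA_S : A ⊆ S := fun x hx => ⟨hx.1, hx.2.2⟩
  have hB_S : B ⊆ S := fun x hx => ⟨hx.1, hx.2.2⟩
  have hAfin : μ A ≠ ⊤ := ne_top_of_le_ne_top hSfin (measure_mono hA_S)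
  have hBfin : μ B ≠ ⊤ := ne_top_of_le_ne_top hSfin (measure_mono hB_S)
  have hDfin : μ (ND \ S) ≠ ⊤ :=
    ne_top_of_le_ne_top hNDfin (measure_mono Set.diff_subset)
  -- real versions
  set cΔ : ℝ := Δm.toReal with hcΔ
  have hcΔpos : 0 < cΔ := ENNReal.toReal_pos hΔpos hΔfin
  set sr : ℝ := (μ S).toReal with hsr
  set ar : ℝ := (μ A).toReal with har
  set br : ℝ := (μ B).toReal with hbr
  have hbr_le : br ≤ ((k+1).choose m : ℝ) * ((N:ℝ) - m*t)^k * cΔ := by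
    have := ENNReal.toReal_mono (by
      exact ENNReal.mul_ne_top (ENNReal.mul_ne_top (ENNReal.natCast_ne_top _) ENNReal.ofReal_ne_top) hΔfin
      ) (le_trans hBmeas (le_of_eq (mul_assoc _ _ _).symm))
    rw [ENNReal.toReal_mul, ENNReal.toReal_mul, ENNReal.toReal_natCast,
      ENNReal.toReal_ofReal (pow_nonneg hr.le k)] at this
    exact this
  have hdr_le : (μ (ND \ S)).toReal ≤ ((k+1:ℕ):ℝ) * ((N:ℝ)-1)^k * cΔ := by
    have := ENNReal.toReal_mono (by
      exact ENNReal.mul_ne_top (ENNReal.mul_ne_top (ENNReal.natCast_ne_top _) ENNReal.ofReal_ne_top) hΔfin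
      ) (le_trans hDiff (le_of_eq (mul_assoc _ _ _).symm))
    rw [ENNReal.toReal_mul, ENNReal.toReal_mul, ENNReal.toReal_natCast,
      ENNReal.toReal_ofReal (pow_nonneg (by linarith : (0:ℝ) ≤ (N:ℝ)-1) k)] at this
    exact this
  have hND_toReal : (μ ND).toReal = (N:ℝ)^k * cΔ := by
    rw [hNDmeas, ENNReal.toReal_mul, ENNReal.toReal_ofReal (by positivity)]
  have hsr_lb : (N:ℝ)^k * cΔ - ((k+1:ℕ):ℝ) * ((N:ℝ)-1)^k * cΔ ≤ sr := by
    have h1 := ENNReal.toReal_mono (by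
        exact ENNReal.add_ne_top.2 ⟨hSfin, hDfin⟩) hsubND
    rw [ENNReal.toReal_add hSfin hDfin, hND_toReal] at h1
    linarith [hdr_le]
  have har_lb : sr - br ≤ ar := by
    have h1 := ENNReal.toReal_mono (ENNReal.add_ne_top.2 ⟨hAfin, hBfin⟩) hsubS
    rw [ENNReal.toReal_add hAfin hBfin] at h1
    linarith
  -- final arithmetic
  rw [hden]
  set P : ℝ := (N:ℝ)^k - ((k+1:ℕ):ℝ) * ((N:ℝ)-1)^k with hPdef
  set Bv : ℝ := ((k+1).choose m : ℝ) * ((N:ℝ) - m*t)^k with hBv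
  have hBv0 : 0 ≤ Bv := by positivity
  have hPc : P * cΔ ≤ sr := by
    rw [hPdef]; ring_nf; ring_nf at hsr_lb; linarith
  have hsrpos : 0 < sr := lt_of_lt_of_le (by positivity) hPc
  have key1 : Bv * cΔ / sr ≤ Bv * cΔ / (P * cΔ) := by
    apply div_le_div_of_nonneg_left (by positivity) (by positivity) hPc
  have key2 : Bv * cΔ / (P * cΔ) = Bv / P := by
    rw [mul_div_mul_right _ _ (ne_of_gt hcΔpos)]
  have key3 : (sr - Bv * cΔ) / sr ≤ ar / sr := by
    exact (div_le_div_iff_of_pos_right hsrpos).mpr (by linarith [hbr_le, har_lb])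
  have key4 : (sr - Bv * cΔ) / sr = 1 - Bv * cΔ / sr := by
    rw [sub_div, div_self (ne_of_gt hsrpos)]
  calc 1 - Bv / P ≤ 1 - Bv * cΔ / sr := by linarith [key1, key2]
    _ ≤ ar / sr := by rw [← key4]; exact key3

end
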